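/- With the Gauss-sequence model of a knotoid diagram D with n ≥ 3 crossings: let d(D) = min_a d(D_a) and d(−D) = min_a d((−D)_a). Then d(D) + d(−D) + 1 ≤ n, and equality holds if and only if D is alternating (over- and under-passages strictly alternate along the diagram). -/

import Mathlib

/-- The label of position `p` relative to base point `a`, i.e. the order in which position `p`
is encountered when traversing the `2*n` positions cyclically starting at base point `a`. -/
def relLabel (n : ℕ) (a : Fin (2 * n + 1)) (p : Fin (2 * n)) : ℕ :=
  (p.val + 2 * n - a.val) % (2 * n)

/-- The warping degree of the diagram with Gauss sequence `o, u` at base point `a`. -/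
def warpingDegree (n : ℕ) (o u : Fin n → Fin (2 * n)) (a : Fin (2 * n + 1)) : ℕ :=
  (Finset.univ.filter fun c => relLabel n a (u c) < relLabel n a (o c)).card

/-- The position `p ↦ 2n - 1 - p` of the reversed diagram. -/
def revPos (n : ℕ) (p : Fin (2 * n)) : Fin (2 * n) :=
  ⟨2 * n - 1 - p.val, by have := p.isLt; omega⟩

/-- The base point of the reversed diagram corresponding to base point `a`. -/
def revBase (n : ℕ) (a : Fin (2 * n + 1)) : Fin (2 * n + 1) :=
  ⟨2 * n - a.val, by have := a.isLt; omega⟩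

/-- The cutting number of crossing `c` at base point `a`: `2α − β − γ` where `α` is the
relabeled position of the over-passage, `β` that of the under-passage and `γ = β + 1`. -/
def cutNum (n : ℕ) (o u : Fin n → Fin (2 * n)) (a : Fin (2 * n + 1)) (c : Fin n) : ℤ :=
  2 * (relLabel n a (o c) : ℤ) - (relLabel n a (u c) : ℤ) - ((relLabel n a (u c) : ℤ) + 1)

/-- The diagram is alternating: along consecutive positions, over-passages and
under-passages strictly alternate. -/
def IsAlternating (n : ℕ) (o u : Fin n → Fin (2 * n)) : Prop :=
  ∀ p q : Fin (2 * n), p.val + 1 = q.val → ((∃ c, o c = p) ↔ (∃ c, u c = q))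

section AuxWD
variable {n : ℕ}

lemma rlEq (a : Fin (2 * n + 1)) (p : Fin (2 * n)) :
    relLabel n a p = if a.val ≤ p.val then p.val - a.val else p.val + 2 * n - a.val := by
  have hp := p.isLt
  have ha := a.isLt
  unfold relLabel
  rcases le_or_gt a.val p.val with h | h
  · rw [if_pos h, show p.val + 2 * n - a.val = (p.val - a.val) + 2 * n by omega,
      Nat.add_mod_right, Nat.mod_eq_of_lt (by omega)]
  · rw [if_neg (by omega), Nat.mod_eq_of_lt (by omega)]

lemma o_ne_u (o u : Fin n → Fin (2 * n))
    (hval : Function.Injective (Sum.elim o u : Fin n ⊕ Fin n → Fin (2 * n)))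
    (c c' : Fin n) : o c ≠ u c' := by
  intro h
  have := hval (a₁ := Sum.inl c) (a₂ := Sum.inr c') (by simpa using h)
  simp at this

lemma o_inj (o u : Fin n → Fin (2 * n))
    (hval : Function.Injective (Sum.elim o u : Fin n ⊕ Fin n → Fin (2 * n))) :
    Function.Injective o := by
  intro x y h
  have := hval (a₁ := Sum.inl x) (a₂ := Sum.inl y) (by simpa using h)
  simpa using this

lemma u_inj (o u : Fin n → Fin (2 * n))
    (hval : Function.Injective (Sum.elim o u : Fin n ⊕ Fin n → Fin (2 * n))) :
    Function.Injective u := by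
  intro x y h
  have := hval (a₁ := Sum.inr x) (a₂ := Sum.inr y) (by simpa using h)
  simpa using this

lemma elim_surj (o u : Fin n → Fin (2 * n))
    (hval : Function.Injective (Sum.elim o u : Fin n ⊕ Fin n → Fin (2 * n))) :
    Function.Surjective (Sum.elim o u : Fin n ⊕ Fin n → Fin (2 * n)) := by
  have hcard : Fintype.card (Fin n ⊕ Fin n) = Fintype.card (Fin (2 * n)) := by
    simp [Fintype.card_sum]; omega
  exact ((Fintype.bijective_iff_injective_and_card _).mpr ⟨hval, hcard⟩).surjective

lemma wd_le (o u : Fin n → Fin (2 * n)) (b : Fin (2 * n + 1)) :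
    warpingDegree n o u b ≤ n := by
  unfold warpingDegree
  calc (Finset.univ.filter fun c => relLabel n b (u c) < relLabel n b (o c)).card
      ≤ (Finset.univ : Finset (Fin n)).card := Finset.card_filter_le _ _
    _ = n := by simp

lemma step_over (o u : Fin n → Fin (2 * n))
    (hval : Function.Injective (Sum.elim o u : Fin n ⊕ Fin n → Fin (2 * n)))
    (s s' : Fin (2 * n + 1)) (hss : s.val + 1 = s'.val)
    (c₀ : Fin n) (hc₀ : (o c₀).val = s.val) :
    warpingDegree n o u s' = warpingDegree n o u s + 1 := by
  have hs : s.val < 2 * n := hc₀ ▸ (o c₀).isLt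
  have hs' := s'.isLt
  have huc₀ : (u c₀).val ≠ s.val := fun h => o_ne_u o u hval c₀ c₀ (Fin.ext (by omega))
  have key : (Finset.univ.filter fun c => relLabel n s' (u c) < relLabel n s' (o c))
      = insert c₀ (Finset.univ.filter fun c => relLabel n s (u c) < relLabel n s (o c)) := by
    ext c
    simp only [Finset.mem_insert, Finset.mem_filter, Finset.mem_univ, true_and]
    by_cases hc : c = c₀
    · subst hc
      have h1 := (u c).isLt
      refine ⟨fun _ => Or.inl rfl, fun _ => ?_⟩
      rw [rlEq, rlEq]
      split_ifs <;> omega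
    · have hoc : (o c).val ≠ s.val := fun h => hc (o_inj o u hval (Fin.ext (by omega)))
      have huc : (u c).val ≠ s.val := fun h => o_ne_u o u hval c₀ c (Fin.ext (by omega))
      have h1 := (u c).isLt
      have h2 := (o c).isLt
      simp only [hc, false_or]
      rw [rlEq, rlEq, rlEq, rlEq]
      split_ifs <;> omega
  have hnotmem : c₀ ∉ (Finset.univ.filter fun c => relLabel n s (u c) < relLabel n s (o c)) := by
    simp only [Finset.mem_filter, Finset.mem_univ, true_and, not_lt]
    rw [rlEq, rlEq]
    have h1 := (u c₀).isLt
    split_ifs <;> omega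
  unfold warpingDegree
  rw [key, Finset.card_insert_of_notMem hnotmem]

lemma step_under (o u : Fin n → Fin (2 * n))
    (hval : Function.Injective (Sum.elim o u : Fin n ⊕ Fin n → Fin (2 * n)))
    (s s' : Fin (2 * n + 1)) (hss : s.val + 1 = s'.val)
    (c₀ : Fin n) (hc₀ : (u c₀).val = s.val) :
    warpingDegree n o u s = warpingDegree n o u s' + 1 := by
  have hs : s.val < 2 * n := hc₀ ▸ (u c₀).isLt
  have hs' := s'.isLt
  have hoc₀ : (o c₀).val ≠ s.val := fun h => o_ne_u o u hval c₀ c₀ (Fin.ext (by omega))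
  have key : (Finset.univ.filter fun c => relLabel n s (u c) < relLabel n s (o c))
      = insert c₀ (Finset.univ.filter fun c => relLabel n s' (u c) < relLabel n s' (o c)) := by
    ext c
    simp only [Finset.mem_insert, Finset.mem_filter, Finset.mem_univ, true_and]
    by_cases hc : c = c₀
    · subst hc
      have h1 := (o c).isLt
      refine ⟨fun _ => Or.inl rfl, fun _ => ?_⟩
      rw [rlEq, rlEq]
      split_ifs <;> omega
    · have huc : (u c).val ≠ s.val := fun h => hc (u_inj o u hval (Fin.ext (by omega)))
      have hoc : (o c).val ≠ s.val := fun h => o_ne_u o u hval c c₀ (Fin.ext (by omega))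
      have h1 := (u c).isLt
      have h2 := (o c).isLt
      simp only [hc, false_or]
      rw [rlEq, rlEq, rlEq, rlEq]
      split_ifs <;> omega
  have hnotmem : c₀ ∉ (Finset.univ.filter fun c => relLabel n s' (u c) < relLabel n s' (o c)) := by
    simp only [Finset.mem_filter, Finset.mem_univ, true_and, not_lt]
    rw [rlEq, rlEq]
    have h1 := (o c₀).isLt
    split_ifs <;> omega
  unfold warpingDegree
  rw [key, Finset.card_insert_of_notMem hnotmem]

lemma rev_wd (o u : Fin n → Fin (2 * n))
    (hval : Function.Injective (Sum.elim o u : Fin n ⊕ Fin n → Fin (2 * n)))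
    (b : Fin (2 * n + 1)) :
    warpingDegree n (fun c => revPos n (o c)) (fun c => revPos n (u c)) b
      + warpingDegree n o u (revBase n b) = n := by
  have hrl : ∀ p : Fin (2 * n),
      relLabel n b (revPos n p) + relLabel n (revBase n b) p = 2 * n - 1 := by
    intro p
    have hp := p.isLt
    have hb := b.isLt
    rw [rlEq, rlEq]
    have e1 : (revPos n p).val = 2 * n - 1 - p.val := rfl
    have e2 : (revBase n b).val = 2 * n - b.val := rfl
    rw [e1, e2]
    split_ifs <;> omega
  have hinj : ∀ c, relLabel n (revBase n b) (u c) ≠ relLabel n (revBase n b) (o c) := by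
    intro c h
    have h1 := (u c).isLt
    have h2 := (o c).isLt
    have hb := (revBase n b).isLt
    rw [rlEq, rlEq] at h
    refine o_ne_u o u hval c c (Fin.ext ?_)
    revert h
    split_ifs <;> omega
  unfold warpingDegree
  have hset : (Finset.univ.filter fun c =>
        relLabel n b (revPos n (u c)) < relLabel n b (revPos n (o c)))
      = Finset.univ.filter fun c =>
        ¬ relLabel n (revBase n b) (u c) < relLabel n (revBase n b) (o c) := by
    apply Finset.filter_congr
    intro c _
    have e1 := hrl (u c)
    have e2 := hrl (o c)
    have e3 := hinj c
    constructor <;> intro h <;> omega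
  rw [hset, add_comm]
  have hc := Finset.card_filter_add_card_filter_not
      (s := (Finset.univ : Finset (Fin n)))
      (p := fun c => relLabel n (revBase n b) (u c) < relLabel n (revBase n b) (o c))
  simp only [Finset.card_univ, Fintype.card_fin] at hc
  omega

lemma under_of_not_over (o u : Fin n → Fin (2 * n))
    (hval : Function.Injective (Sum.elim o u : Fin n ⊕ Fin n → Fin (2 * n)))
    (t : ℕ) (ht : t < 2 * n) (hno : ¬ ∃ c, (o c).val = t) : ∃ c, (u c).val = t := by
  obtain ⟨x, hx⟩ := elim_surj o u hval ⟨t, ht⟩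
  cases x with
  | inl c => exact absurd ⟨c, by simpa using congrArg Fin.val hx⟩ hno
  | inr c => exact ⟨c, by simpa using congrArg Fin.val hx⟩

set_option maxHeartbeats 1000000 in
lemma alt_parity (o u : Fin n → Fin (2 * n))
    (hval : Function.Injective (Sum.elim o u : Fin n ⊕ Fin n → Fin (2 * n)))
    (halt : IsAlternating n o u) :
    ∀ t, t < 2 * n → ((∃ c, (o c).val = t) ↔ ((∃ c, (o c).val = 0) ↔ t % 2 = 0)) := by
  intro t
  induction t with
  | zero => intro ht; simp
  | succ t ih =>
    intro ht
    have ht' : t < 2 * n := by omega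
    have h1 := halt ⟨t, ht'⟩ ⟨t + 1, ht⟩ rfl
    have e1 : (∃ c, o c = (⟨t, ht'⟩ : Fin (2 * n))) ↔ ∃ c, (o c).val = t :=
      exists_congr fun c => by rw [Fin.ext_iff]
    have e2 : (∃ c, u c = (⟨t + 1, ht⟩ : Fin (2 * n))) ↔ ∃ c, (u c).val = t + 1 :=
      exists_congr fun c => by rw [Fin.ext_iff]
    rw [e1, e2] at h1
    have h2 : (∃ c, (u c).val = t + 1) ↔ ¬ (∃ c, (o c).val = t + 1) := by
      constructor
      · rintro ⟨c, hc⟩ ⟨c', hc'⟩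
        exact o_ne_u o u hval c' c (Fin.ext (by omega))
      · intro hno
        exact under_of_not_over o u hval (t + 1) ht hno
    have ihh := ih ht'
    clear ih
    by_cases hv : ∃ c, (o c).val = 0
    · by_cases hpar2 : t % 2 = 0
      · have hOt : ∃ c, (o c).val = t := ihh.mpr ⟨fun _ => hpar2, fun _ => hv⟩
        have hnOt1 : ¬ ∃ c, (o c).val = t + 1 := h2.mp (h1.mp hOt)
        exact iff_of_false hnOt1 (fun hiff => by have := hiff.mp hv; omega)
      · have hnOt : ¬ ∃ c, (o c).val = t := fun hO => hpar2 ((ihh.mp hO).mp hv)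
        have hnUt1 : ¬ ∃ c, (u c).val = t + 1 := fun hU => hnOt (h1.mpr hU)
        have hOt1 : ∃ c, (o c).val = t + 1 := by
          by_contra hnn
          exact hnUt1 (h2.mpr hnn)
        exact iff_of_true hOt1 ⟨fun _ => by omega, fun _ => hv⟩
    · by_cases hpar2 : t % 2 = 0
      · have hnOt : ¬ ∃ c, (o c).val = t := fun hO => hv ((ihh.mp hO).mpr hpar2)
        have hnUt1 : ¬ ∃ c, (u c).val = t + 1 := fun hU => hnOt (h1.mpr hU)
        have hOt1 : ∃ c, (o c).val = t + 1 := by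
          by_contra hnn
          exact hnUt1 (h2.mpr hnn)
        exact iff_of_true hOt1 ⟨fun h => absurd h hv, fun h => by omega⟩
      · have hOt : ∃ c, (o c).val = t := ihh.mpr ⟨fun h => absurd h hv, fun h => absurd h hpar2⟩
        have hnOt1 : ¬ ∃ c, (o c).val = t + 1 := h2.mp (h1.mp hOt)
        exact iff_of_false hnOt1 (fun hiff => hv (hiff.mpr (by omega)))

end AuxWD

set_option maxHeartbeats 2000000 in
/-- Theorem 4.1: for a diagram `D` with `n ≥ 3` crossings, `d(D) + d(−D) + 1 ≤ n`, with
equality iff `D` is alternating. -/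
theorem warpingDegree_add_rev_lt_crossings (n : ℕ) (hn : 3 ≤ n)
    (o u : Fin n → Fin (2 * n))
    (hval : Function.Injective (Sum.elim o u : Fin n ⊕ Fin n → Fin (2 * n)))
    (a a' : Fin (2 * n + 1))
    (ha : ∀ b, warpingDegree n o u a ≤ warpingDegree n o u b)
    (ha' : ∀ b, warpingDegree n (fun c => revPos n (o c)) (fun c => revPos n (u c)) a' ≤
      warpingDegree n (fun c => revPos n (o c)) (fun c => revPos n (u c)) b) :
    warpingDegree n o u a +
        warpingDegree n (fun c => revPos n (o c)) (fun c => revPos n (u c)) a' + 1 ≤ n ∧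
    (warpingDegree n o u a +
        warpingDegree n (fun c => revPos n (o c)) (fun c => revPos n (u c)) a' + 1 = n ↔
      IsAlternating n o u) := by
  have hnpos : 0 < 2 * n := by omega
  have hrev : ∀ b, warpingDegree n (fun c => revPos n (o c)) (fun c => revPos n (u c)) b
      + warpingDegree n o u (revBase n b) = n := rev_wd o u hval
  have hA : ∀ b, warpingDegree n o u b ≤ warpingDegree n o u (revBase n a') := by
    intro b
    have h1 := hrev (revBase n b)
    have h2 := hrev a'
    have h3 := ha' (revBase n b)
    have h4 : revBase n (revBase n b) = b := by
      have := b.isLt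
      exact Fin.ext (by simp [revBase]; omega)
    rw [h4] at h1
    omega
  set A := revBase n a' with hAdef
  have hVA : warpingDegree n (fun c => revPos n (o c)) (fun c => revPos n (u c)) a'
      + warpingDegree n o u A = n := hrev a'
  have hVAle : warpingDegree n o u A ≤ n := wd_le o u A
  have H1 : warpingDegree n o u a + 1 ≤ warpingDegree n o u A := by
    have hle0 := ha ⟨0, by omega⟩
    have hle1 := ha ⟨1, by omega⟩
    have hge0 := hA ⟨0, by omega⟩
    have hge1 := hA ⟨1, by omega⟩
    by_cases h : ∃ c, (o c).val = 0
    · obtain ⟨c, hc⟩ := h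
      have := step_over o u hval ⟨0, by omega⟩ ⟨1, by omega⟩ rfl c hc
      omega
    · obtain ⟨c, hc⟩ := under_of_not_over o u hval 0 hnpos h
      have := step_under o u hval ⟨0, by omega⟩ ⟨1, by omega⟩ rfl c hc
      omega
  refine ⟨by omega, ?_⟩
  have hiff : (warpingDegree n o u a +
      warpingDegree n (fun c => revPos n (o c)) (fun c => revPos n (u c)) a' + 1 = n)
      ↔ (warpingDegree n o u a + 1 = warpingDegree n o u A) := by omega
  rw [hiff]
  constructor
  · intro hEq p q hpq
    have hq : q.val < 2 * n := q.isLt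
    have key : (∃ c, (o c).val = p.val) ↔ ¬ ∃ c, (o c).val = q.val := by
      constructor
      · rintro ⟨c, hc⟩ ⟨c', hc'⟩
        have s1 := step_over o u hval ⟨p.val, by omega⟩ ⟨p.val + 1, by omega⟩ rfl c hc
        have s2 := step_over o u hval ⟨p.val + 1, by omega⟩ ⟨p.val + 2, by omega⟩ rfl c' (show (o c').val = p.val + 1 by omega)
        have b1 := ha ⟨p.val, by omega⟩
        have b2 := hA ⟨p.val + 2, by omega⟩
        omega
      · intro hno
        by_contra hnop
        obtain ⟨c, hc⟩ := under_of_not_over o u hval p.val (by omega) hnop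
        obtain ⟨c', hc'⟩ := under_of_not_over o u hval q.val hq hno
        have s1 := step_under o u hval ⟨p.val, by omega⟩ ⟨p.val + 1, by omega⟩ rfl c hc
        have s2 := step_under o u hval ⟨p.val + 1, by omega⟩ ⟨p.val + 2, by omega⟩ rfl c' (show (u c').val = p.val + 1 by omega)
        have b1 := hA ⟨p.val, by omega⟩
        have b2 := ha ⟨p.val + 2, by omega⟩
        omega
    have hunder : (∃ c, u c = q) ↔ ¬ ∃ c, (o c).val = q.val := by
      constructor
      · rintro ⟨c, rfl⟩ ⟨c', hc'⟩
        exact o_ne_u o u hval c' c (Fin.ext hc')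
      · intro hno
        obtain ⟨c, hc⟩ := under_of_not_over o u hval q.val hq hno
        exact ⟨c, Fin.ext hc⟩
    rw [hunder, ← key]
    exact exists_congr fun c => by rw [Fin.ext_iff]
  · intro halt
    have hover := alt_parity o u hval halt
    have wpar : ∀ t, ∀ h : t ≤ 2 * n,
        ((∃ c, (o c).val = 0) →
          warpingDegree n o u ⟨t, by omega⟩ = warpingDegree n o u ⟨0, by omega⟩ + t % 2) ∧
        (¬ (∃ c, (o c).val = 0) →
          warpingDegree n o u ⟨t, by omega⟩ + t % 2 = warpingDegree n o u ⟨0, by omega⟩) := by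
      intro t
      induction t with
      | zero => intro h; simp
      | succ t ih =>
        intro h
        have ht : t < 2 * n := by omega
        obtain ⟨ih1, ih2⟩ := ih (by omega)
        have hovt := hover t ht
        constructor
        · intro h0
          have hih := ih1 h0
          by_cases hpar : t % 2 = 0
          · obtain ⟨c, hc⟩ := hovt.mpr (by tauto)
            have := step_over o u hval ⟨t, by omega⟩ ⟨t + 1, by omega⟩ rfl c hc
            omega
          · have hnOt : ¬ ∃ c, (o c).val = t := fun hh => hpar ((hovt.mp hh).mp h0)
            obtain ⟨c, hc⟩ := under_of_not_over o u hval t ht hnOt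
            have := step_under o u hval ⟨t, by omega⟩ ⟨t + 1, by omega⟩ rfl c hc
            omega
        · intro h0
          have hih := ih2 h0
          by_cases hpar : t % 2 = 0
          · have hnOt : ¬ ∃ c, (o c).val = t := fun hh => h0 ((hovt.mp hh).mpr hpar)
            obtain ⟨c, hc⟩ := under_of_not_over o u hval t ht hnOt
            have := step_under o u hval ⟨t, by omega⟩ ⟨t + 1, by omega⟩ rfl c hc
            omega
          · obtain ⟨c, hc⟩ := hovt.mpr (by tauto)
            have := step_over o u hval ⟨t, by omega⟩ ⟨t + 1, by omega⟩ rfl c hc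
            omega
    obtain ⟨w1, w2⟩ := wpar 1 (by omega)
    have haval := wpar a.val (by have := a.isLt; omega)
    have hAval := wpar A.val (by have := A.isLt; omega)
    simp only [Fin.eta] at haval hAval
    obtain ⟨ha1, ha2⟩ := haval
    obtain ⟨hA1, hA2⟩ := hAval
    have hle0 := ha ⟨0, by omega⟩
    have hle1 := ha ⟨1, by omega⟩
    have hge0 := hA ⟨0, by omega⟩
    have hge1 := hA ⟨1, by omega⟩
    by_cases h0 : ∃ c, (o c).val = 0
    · have e1 := w1 h0
      have e2 := ha1 h0
      have e3 := hA1 h0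
      omega
    · have e1 := w2 h0
      have e2 := ha2 h0
      have e3 := hA2 h0
      omega
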